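/- Under the assumption rank(bcirc(X_0)) = nr, the identified tensor A with X_1 = A ⋆ X_0 is stable if and only if every Fourier-domain block diagonal matrix of F{bcirc(X_1 ⋆ X_0^†)} is stable, where X_0^† is a right T-inverse of X_0. -/

import Mathlib

open Matrix Complex

/-- A third-order tensor with `s` frontal slices of size `n × m`. -/
abbrev Tensor3 (n m s : ℕ) (R : Type*) := ZMod s → Matrix (Fin n) (Fin m) R

/-- Block circulant matrix of a third-order tensor: the `(i,j)` block is slice `i - j`. -/
def bcirc {n m s : ℕ} {R : Type*} (T : Tensor3 n m s R) :
    Matrix (ZMod s × Fin n) (ZMod s × Fin m) R :=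
  fun ia jb => T (ia.1 - jb.1) ia.2 jb.2

/-- Unfold a tensor by stacking its frontal slices vertically. -/
def unfold {m r s : ℕ} {R : Type*} (S : Tensor3 m r s R) :
    Matrix (ZMod s × Fin m) (Fin r) R :=
  fun ia b => S ia.1 ia.2 b

/-- The T-product: `fold (bcirc T * unfold S)`. -/
def tProd {n m r s : ℕ} [NeZero s] (T : Tensor3 n m s ℝ) (S : Tensor3 m r s ℝ) :
    Tensor3 n r s ℝ :=
  fun k a b => (bcirc T * unfold S) (k, a) b

/-- The T-identity tensor: first frontal slice is the identity, the rest are zero. -/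
def tId {n s : ℕ} : Tensor3 n n s ℝ :=
  fun k => if k = 0 then 1 else 0

/-- The T-transpose: transpose each frontal slice and reverse the order of slices 2..s. -/
def ttrans {n m s : ℕ} {R : Type*} (T : Tensor3 n m s R) : Tensor3 m n s R :=
  fun k => (T (-k))ᵀ

/-- The unitary discrete Fourier transform matrix of size `s`. -/
noncomputable def dft (s : ℕ) : Matrix (ZMod s) (ZMod s) ℂ :=
  fun j k => Complex.exp (-2 * Real.pi * Complex.I * (j.val * k.val) / s) / Real.sqrt s

/-- The `j`-th Fourier-domain block of a tensor: the `j`-th component of the DFT of the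
frontal slices along the third mode. -/
noncomputable def fourierBlock {n m s : ℕ} [NeZero s]
    (T : Tensor3 n m s ℂ) (j : ZMod s) : Matrix (Fin n) (Fin m) ℂ :=
  ∑ k : ZMod s, Complex.exp (-2 * Real.pi * Complex.I * (j.val * k.val) / s) • T k

/-- Block diagonal matrix with blocks `B j`. -/
def blkdiag {n m s : ℕ} [DecidableEq (ZMod s)] (B : ZMod s → Matrix (Fin n) (Fin m) ℂ) :
    Matrix (ZMod s × Fin n) (ZMod s × Fin m) ℂ :=
  fun ia jb => if ia.1 = jb.1 then B ia.1 ia.2 jb.2 else 0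

/-- A real square matrix is stable if all its (complex) eigenvalues have modulus `< 1`. -/
def MStable {N : Type*} [Fintype N] [DecidableEq N] (M : Matrix N N ℝ) : Prop :=
  ∀ μ ∈ (M.map Complex.ofReal).charpoly.roots, ‖μ‖ < 1

/-- A complex square matrix is stable if all its eigenvalues have modulus `< 1`. -/
def CStable {N : Type*} [Fintype N] [DecidableEq N] (M : Matrix N N ℂ) : Prop :=
  ∀ μ ∈ M.charpoly.roots, ‖μ‖ < 1


set_option linter.unusedSectionVars false

lemma unfold_tProd {n m r s : ℕ} [NeZero s] (T : Tensor3 n m s ℝ) (S : Tensor3 m r s ℝ) :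
    unfold (tProd T S) = bcirc T * unfold S := rfl

lemma bcirc_tProd {n m p s : ℕ} [NeZero s] (T : Tensor3 n m s ℝ) (S : Tensor3 m p s ℝ) :
    bcirc (tProd T S) = bcirc T * bcirc S := by
  ext ⟨k, a⟩ ⟨j, b⟩
  show (bcirc T * unfold S) (k - j, a) b = _
  simp only [Matrix.mul_apply, Fintype.sum_prod_type, bcirc, unfold]
  refine Fintype.sum_equiv (Equiv.addRight j) _ _ fun l => ?_
  have h1 : k - j - l = k - (l + j) := by ring
  have h2 : l + j - j = l := by ring
  simp only [Equiv.coe_addRight, h1, h2]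

lemma tProd_assoc {n m p q s : ℕ} [NeZero s] (T : Tensor3 n m s ℝ) (S : Tensor3 m p s ℝ)
    (U : Tensor3 p q s ℝ) : tProd (tProd T S) U = tProd T (tProd S U) := by
  funext k a b
  show (bcirc (tProd T S) * unfold U) (k, a) b = (bcirc T * unfold (tProd S U)) (k, a) b
  rw [bcirc_tProd, unfold_tProd, Matrix.mul_assoc]

lemma tProd_tId {n s : ℕ} [NeZero s] (T : Tensor3 n n s ℝ) : tProd T tId = T := by
  funext k a b
  show ∑ jc : ZMod s × Fin n, bcirc T (k, a) jc * unfold tId jc b = T k a b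
  simp only [Fintype.sum_prod_type, bcirc, unfold, tId]
  have h : ∀ x : ZMod s, ∀ x1 : Fin n,
      T (k - x) a x1 * (if x = 0 then (1:Matrix (Fin n) (Fin n) ℝ) else 0) x1 b
      = if x = 0 then T (k - x) a x1 * (1:Matrix (Fin n) (Fin n) ℝ) x1 b else 0 := by
    intro x x1; split <;> simp
  simp only [h]
  rw [Finset.sum_comm]
  simp [Finset.sum_ite_eq', Matrix.one_apply, mul_ite, mul_one, mul_zero]

noncomputable def ee (r : ℕ) (m : ZMod r) : ℂ :=
  Complex.exp (-2 * Real.pi * Complex.I * m.val / r)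

lemma ee_nat (r : ℕ) [NeZero r] (a : ℕ) :
    Complex.exp (-2 * Real.pi * Complex.I * a / r) = ee r ((a : ZMod r)) := by
  have hr : (r : ℂ) ≠ 0 := Nat.cast_ne_zero.mpr (NeZero.ne r)
  have hv : ((a : ZMod r)).val = a % r := ZMod.val_natCast r a
  have hnat : a % r + a / r * r = a := Nat.mod_add_div' a r
  have ha0 : (((a % r + a / r * r : ℕ)) : ℂ) = (a : ℂ) := by exact_mod_cast hnat
  have ha : (a : ℂ) = ((a % r : ℕ) : ℂ) + ((a / r : ℕ) : ℂ) * r := by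
    rw [← ha0]; push_cast; ring
  have key : ∀ A Q : ℂ, -2 * Real.pi * Complex.I * (A + Q * r) / r
      = -2 * Real.pi * Complex.I * A / r + (-Q) * (2 * Real.pi * Complex.I) := by
    intro A Q; field_simp; ring
  have hq : ((-(a / r : ℕ) : ℤ) : ℂ) = -((a / r : ℕ) : ℂ) := by
    rw [Int.cast_neg, Int.cast_natCast]
  rw [ee, hv, ha, key, ← hq, Complex.exp_add, Complex.exp_int_mul_two_pi_mul_I, mul_one]

lemma ee_add (r : ℕ) [NeZero r] (x y : ZMod r) : ee r (x + y) = ee r x * ee r y := by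
  have hx : ((x.val : ZMod r)) = x := ZMod.natCast_rightInverse x
  have hy : ((y.val : ZMod r)) = y := ZMod.natCast_rightInverse y
  have h : x + y = ((x.val + y.val : ℕ) : ZMod r) := by rw [Nat.cast_add, hx, hy]
  rw [h, ← ee_nat]
  have : -2 * Real.pi * Complex.I * ((x.val + y.val : ℕ) : ℂ) / r
      = -2 * Real.pi * Complex.I * x.val / r + -2 * Real.pi * Complex.I * y.val / r := by
    push_cast; ring
  rw [this, Complex.exp_add]; rfl

lemma ee_mul_pow (r : ℕ) [NeZero r] (m l : ZMod r) : ee r (m * l) = (ee r m) ^ l.val := by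
  have hx : ((m.val : ZMod r)) = m := ZMod.natCast_rightInverse m
  have hy : ((l.val : ZMod r)) = l := ZMod.natCast_rightInverse l
  have h : m * l = ((m.val * l.val : ℕ) : ZMod r) := by rw [Nat.cast_mul, hx, hy]
  rw [h, ← ee_nat]
  simp only [ee]
  rw [← Complex.exp_nat_mul]
  congr 1
  push_cast
  ring

lemma ee_zero (r : ℕ) [NeZero r] : ee r 0 = 1 := by
  simp [ee, ZMod.val_zero]

lemma ee_pow_r (r : ℕ) [NeZero r] (m : ZMod r) : (ee r m) ^ r = 1 := by
  rw [ee, ← Complex.exp_nat_mul]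
  have hr : (r : ℂ) ≠ 0 := Nat.cast_ne_zero.mpr (NeZero.ne r)
  have : (r : ℂ) * (-2 * Real.pi * Complex.I * m.val / r)
      = ((-(m.val) : ℤ) : ℂ) * (2 * Real.pi * Complex.I) := by
    push_cast; field_simp
  rw [this, Complex.exp_int_mul_two_pi_mul_I]

lemma ee_ne_one (r : ℕ) [NeZero r] (m : ZMod r) (hm : m ≠ 0) : ee r m ≠ 1 := by
  intro h
  rw [ee, Complex.exp_eq_one_iff] at h
  obtain ⟨k, hk⟩ := h
  have hr : (r : ℂ) ≠ 0 := Nat.cast_ne_zero.mpr (NeZero.ne r)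
  rw [div_eq_iff hr] at hk
  have h2pi : (2 * (Real.pi : ℂ) * Complex.I) ≠ 0 :=
    mul_ne_zero (mul_ne_zero two_ne_zero (Complex.ofReal_ne_zero.mpr Real.pi_ne_zero))
      Complex.I_ne_zero
  have hc : (2 * (Real.pi : ℂ) * Complex.I) * (-(m.val : ℂ))
      = (2 * (Real.pi : ℂ) * Complex.I) * ((k : ℂ) * r) := by linear_combination hk
  have hc2 : -(m.val : ℂ) = (k : ℂ) * r := mul_left_cancel₀ h2pi hc
  have hc3 : ((m.val : ℤ) : ℂ) = (((-k) * r : ℤ) : ℂ) := by push_cast; linear_combination -hc2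
  have hint : (m.val : ℤ) = -k * r := by exact_mod_cast hc3
  have hdvd : (r : ℤ) ∣ (m.val : ℤ) := Dvd.intro (-k) (by linarith)
  have hdvd' : r ∣ m.val := Int.natCast_dvd_natCast.mp hdvd
  have hv0 : m.val ≠ 0 := fun h0 => hm ((ZMod.val_eq_zero m).mp h0)
  have := Nat.le_of_dvd (Nat.pos_of_ne_zero hv0) hdvd'
  exact absurd (ZMod.val_lt m) (not_lt.mpr this)

lemma sum_val_eq_range (r : ℕ) [NeZero r] (f : ℕ → ℂ) :
    ∑ l : ZMod r, f l.val = ∑ i ∈ Finset.range r, f i := by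
  obtain ⟨k, rfl⟩ := Nat.exists_eq_succ_of_ne_zero (NeZero.ne r)
  exact Fin.sum_univ_eq_sum_range (fun i => f i) (k + 1)

lemma sum_ee (r : ℕ) [NeZero r] (m : ZMod r) :
    ∑ l : ZMod r, ee r (m * l) = if m = 0 then (r : ℂ) else 0 := by
  simp only [ee_mul_pow]
  rw [show (∑ l : ZMod r, ee r m ^ l.val) = ∑ i ∈ Finset.range r, ee r m ^ i from
    sum_val_eq_range r (fun i => ee r m ^ i)]
  split
  · next h => simp [h, ee_zero]
  · next h =>
    rw [geom_sum_eq (ee_ne_one r m h), ee_pow_r, sub_self, zero_div]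

section Mats
variable {n r : ℕ} [NeZero r]

lemma exp_eq_ee (j k : ZMod r) :
    Complex.exp (-2 * Real.pi * Complex.I * (j.val * k.val) / r) = ee r (j * k) := by
  have hx : ((j.val : ZMod r)) = j := ZMod.natCast_rightInverse j
  have hy : ((k.val : ZMod r)) = k := ZMod.natCast_rightInverse k
  have h : ((j.val : ℂ) * k.val) = ((j.val * k.val : ℕ) : ℂ) := by push_cast; ring
  rw [h, ee_nat, Nat.cast_mul, hx, hy]

lemma fourierBlock_eq {m : ℕ} (T : Tensor3 n m r ℂ) (j : ZMod r) :
    fourierBlock T j = ∑ k : ZMod r, ee r (j * k) • T k := by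
  simp only [fourierBlock, exp_eq_ee]

noncomputable def Fm (n r : ℕ) : Matrix (ZMod r × Fin n) (ZMod r × Fin n) ℂ :=
  fun p q => if p.2 = q.2 then ee r (p.1 * q.1) else 0

noncomputable def Gm (n r : ℕ) : Matrix (ZMod r × Fin n) (ZMod r × Fin n) ℂ :=
  fun p q => if p.2 = q.2 then ee r (-(p.1 * q.1)) else 0

lemma Fm_mul_Gm : Fm n r * Gm n r = (r : ℂ) • 1 := by
  ext ⟨j, a⟩ ⟨k, b⟩
  simp only [Matrix.mul_apply, Fintype.sum_prod_type, Fm, Gm]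
  have h : ∀ l : ZMod r, ∀ c : Fin n,
      (if a = c then ee r (j * l) else 0) * (if c = b then ee r (-(l * k)) else 0)
      = if c = b then (if a = c then ee r ((j - k) * l) else 0) else 0 := by
    intro l c
    split
    · split
      · rw [← ee_add]; ring_nf
      · ring
    · simp
  simp only [h, Finset.sum_ite_eq' Finset.univ, Finset.mem_univ, if_true]
  by_cases hab : a = b
  · subst hab
    simp only [if_true]
    rw [sum_ee]
    by_cases hjk : j = k <;>
      simp [hjk, sub_eq_zero, Matrix.smul_apply, Matrix.one_apply, Prod.ext_iff]
  · simp [hab, Matrix.smul_apply, Matrix.one_apply, Prod.ext_iff]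

lemma det_Fm_ne_zero : (Fm n r).det ≠ 0 := by
  intro h
  have h1 : (Fm n r * Gm n r).det = ((r : ℂ) • (1 : Matrix (ZMod r × Fin n) (ZMod r × Fin n) ℂ)).det := by
    rw [Fm_mul_Gm]
  rw [Matrix.det_mul, h, zero_mul] at h1
  rw [Matrix.det_smul, Matrix.det_one, mul_one] at h1
  have hr : (r : ℂ) ≠ 0 := Nat.cast_ne_zero.mpr (NeZero.ne r)
  exact pow_ne_zero _ hr h1.symm

lemma Fm_mul_bcirc (Tc : Tensor3 n n r ℂ) :
    Fm n r * bcirc Tc = blkdiag (fourierBlock Tc) * Fm n r := by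
  ext ⟨j, a⟩ ⟨k, b⟩
  simp only [Matrix.mul_apply, Fintype.sum_prod_type, Fm, bcirc, blkdiag]
  have hL : ∀ l : ZMod r, ∀ c : Fin n,
      (if a = c then ee r (j * l) else 0) * Tc (l - k) c b
      = if a = c then ee r (j * l) * Tc (l - k) c b else 0 := by
    intro l c; split <;> simp
  have hR : ∀ l : ZMod r, ∀ c : Fin n,
      (if j = l then fourierBlock Tc j a c else 0) * (if c = b then ee r (l * k) else 0)
      = if c = b then (if j = l then fourierBlock Tc j a c * ee r (l * k) else 0) else 0 := by
    intro l c
    by_cases h1 : j = l <;> by_cases h2 : c = b <;> simp [h1, h2]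
  simp only [hL, hR, Finset.sum_ite_eq' Finset.univ, Finset.sum_ite_eq Finset.univ,
    Finset.mem_univ, if_true]
  rw [fourierBlock_eq]
  simp only [Matrix.sum_apply, Matrix.smul_apply, smul_eq_mul]
  rw [Finset.sum_mul]
  refine Fintype.sum_equiv (Equiv.subRight k) _ _ fun c => ?_
  have h2 : j * c = j * (c - k) + j * k := by ring
  simp only [Equiv.subRight_apply, h2, ee_add]
  ring

end Mats

section Mats2
variable {n r : ℕ} [NeZero r]

lemma det_blkdiag (B : ZMod r → Matrix (Fin n) (Fin n) ℂ) :
    (blkdiag B).det = ∏ j : ZMod r, (B j).det := by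
  have h : blkdiag B = (Matrix.blockDiagonal B).submatrix
      (Equiv.prodComm (ZMod r) (Fin n)) (Equiv.prodComm (ZMod r) (Fin n)) := by
    ext ⟨j, a⟩ ⟨k, b⟩
    simp [blkdiag, Matrix.blockDiagonal_apply, Matrix.submatrix_apply]
  rw [h, Matrix.det_submatrix_equiv_self, Matrix.det_blockDiagonal]

lemma eval_charpoly {N : Type*} [Fintype N] [DecidableEq N] (M : Matrix N N ℂ) (μ : ℂ) :
    M.charpoly.eval μ = (μ • (1 : Matrix N N ℂ) - M).det := by
  rw [Matrix.charpoly, ← Polynomial.coe_evalRingHom, RingHom.map_det]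
  congr 1
  ext i j
  by_cases h : i = j <;>
    simp [Matrix.charmatrix_apply, h, Matrix.one_apply, Matrix.smul_apply, Matrix.sub_apply]

lemma smul_one_sub_blkdiag (μ : ℂ) (B : ZMod r → Matrix (Fin n) (Fin n) ℂ) :
    μ • (1 : Matrix (ZMod r × Fin n) (ZMod r × Fin n) ℂ) - blkdiag B
      = blkdiag (fun j => μ • (1 : Matrix (Fin n) (Fin n) ℂ) - B j) := by
  ext ⟨j, a⟩ ⟨k, b⟩
  by_cases hjk : j = k <;> by_cases hab : a = b <;>
    simp [blkdiag, Matrix.one_apply, Matrix.smul_apply, Matrix.sub_apply, Prod.ext_iff, hjk, hab]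

lemma det_smul_one_sub_bcirc (Tc : Tensor3 n n r ℂ) (μ : ℂ) :
    (μ • (1 : Matrix (ZMod r × Fin n) (ZMod r × Fin n) ℂ) - bcirc Tc).det
      = ∏ j : ZMod r, (μ • (1 : Matrix (Fin n) (Fin n) ℂ) - fourierBlock Tc j).det := by
  have h1 : Fm n r * (μ • 1 - bcirc Tc)
      = (μ • 1 - blkdiag (fourierBlock Tc)) * Fm n r := by
    rw [Matrix.mul_sub, Matrix.sub_mul, Fm_mul_bcirc]
    congr 1
    simp [Matrix.mul_smul, Matrix.smul_mul]
  have h2 := congrArg Matrix.det h1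
  rw [Matrix.det_mul, Matrix.det_mul,
    mul_comm ((μ • 1 - blkdiag (fourierBlock Tc)).det) ((Fm n r).det)] at h2
  have h3 := mul_left_cancel₀ det_Fm_ne_zero h2
  rw [h3, smul_one_sub_blkdiag, det_blkdiag]

lemma mem_roots_bcirc (Tc : Tensor3 n n r ℂ) (μ : ℂ) :
    μ ∈ (bcirc Tc).charpoly.roots ↔ ∃ j : ZMod r, μ ∈ (fourierBlock Tc j).charpoly.roots := by
  simp only [Polynomial.mem_roots ((Matrix.charpoly_monic _).ne_zero),
    Polynomial.IsRoot, _root_.eval_charpoly, det_smul_one_sub_bcirc, Finset.prod_eq_zero_iff,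
    Finset.mem_univ, true_and]

end Mats2

/-- under `rank (bcirc X₀) = n * r`, the identified tensor `A` is stable iff
every Fourier-domain block of `bcirc (X₁ ⋆ X₀†)` is stable. -/
theorem informativity_stability_fourier {n M r : ℕ} [NeZero r]
    (X0 X1 : Tensor3 n M r ℝ) (X0d : Tensor3 M n r ℝ) (A : Tensor3 n n r ℝ)
    (hrank : (bcirc X0).rank = n * r)
    (hinv : tProd X0 X0d = tId)
    (hA : X1 = tProd A X0) :
    MStable (bcirc A) ↔
      ∀ j : ZMod r,
        CStable (fourierBlock (fun k => ((tProd X1 X0d) k).map Complex.ofReal) j) := by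
  have hXA : tProd X1 X0d = A := by rw [hA, tProd_assoc, hinv, tProd_tId]
  rw [hXA]
  have hmap : (bcirc A).map Complex.ofReal
      = bcirc (fun k => (A k).map Complex.ofReal : Tensor3 n n r ℂ) := rfl
  unfold MStable CStable
  rw [hmap]
  constructor
  · intro h j μ hμ
    exact h μ ((mem_roots_bcirc _ μ).mpr ⟨j, hμ⟩)
  · intro h μ hμ
    obtain ⟨j, hj⟩ := (mem_roots_bcirc _ μ).mp hμ
    exact h j μ hj
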